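/- Let m ≥ 1 and let ‖·‖_F be any norm on ℝ^m. Let X be a standard Gaussian vector in ℝ^m. Then there exists a linear map J : ℝ^m → ℝ^m with 𝔼‖J X‖_F = 1 such that for every linear projection P : ℝ^m → ℝ^m (i.e., P ∘ P = P) one has 𝔼‖J P X‖_F ≥ rank(P)/m. -/

import Mathlib

open MeasureTheory ProbabilityTheory Filter

section Helpers

variable {E : Type*} [NormedAddCommGroup E] [NormedSpace ℝ E]

lemma normlike_nonneg (f : E → ℝ) (hs : ∀ (c : ℝ) (x), f (c • x) = |c| * f x)
    (ha : ∀ x y, f (x + y) ≤ f x + f y) (x : E) : 0 ≤ f x := by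
  have h0 : f 0 = 0 := by simpa using hs 0 0
  have := ha x (-x)
  have hneg : f (-x) = f x := by simpa using hs (-1) x
  rw [add_neg_cancel, h0] at this
  linarith

omit [NormedSpace ℝ E] in
lemma normlike_sum_le {ι : Type*} (f : E → ℝ) (h0 : f 0 = 0)
    (ha : ∀ x y, f (x + y) ≤ f x + f y) (s : Finset ι) (g : ι → E) :
    f (∑ i ∈ s, g i) ≤ ∑ i ∈ s, f (g i) := by
  classical
  induction s using Finset.induction_on with
  | empty => simp [h0]
  | insert _ _ hni ih =>
      rw [Finset.sum_insert hni, Finset.sum_insert hni]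
      exact le_trans (ha _ _) (by linarith)

lemma normlike_continuous (f : E → ℝ) {C : ℝ}
    (hs : ∀ (c : ℝ) (x), f (c • x) = |c| * f x)
    (ha : ∀ x y, f (x + y) ≤ f x + f y)
    (hb : ∀ x, f x ≤ C * ‖x‖) : Continuous f := by
  have key : ∀ x y : E, f x - f y ≤ C * ‖x - y‖ := by
    intro x y
    have := ha y (x - y)
    simp only [add_sub_cancel] at this
    linarith [hb (x - y)]
  refine (LipschitzWith.of_dist_le_mul (K := ⟨max C 0, le_max_right _ _⟩)
    (fun x y => ?_)).continuous
  rw [Real.dist_eq, dist_eq_norm, abs_sub_le_iff]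
  have h1 := key x y
  have h2 := key y x
  have hxy : ‖y - x‖ = ‖x - y‖ := norm_sub_rev y x
  have hC : C * ‖x - y‖ ≤ max C 0 * ‖x - y‖ :=
    mul_le_mul_of_nonneg_right (le_max_left _ _) (norm_nonneg _)
  rw [hxy] at h2
  constructor <;> change _ ≤ max C 0 * ‖x - y‖ <;> linarith

lemma normlike_lower [Nontrivial E] [ProperSpace E] (f : E → ℝ)
    (hf : Continuous f) (hpos : ∀ x, x ≠ 0 → 0 < f x)
    (hs : ∀ (c : ℝ) (x), f (c • x) = |c| * f x) :
    ∃ c : ℝ, 0 < c ∧ ∀ x, c * ‖x‖ ≤ f x := by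
  obtain ⟨x₀, hx₀S, hx₀min⟩ := (isCompact_sphere (0 : E) 1).exists_isMinOn
    (NormedSpace.sphere_nonempty.mpr zero_le_one) hf.continuousOn
  have hx₀norm : ‖x₀‖ = 1 := by simpa using mem_sphere_zero_iff_norm.mp hx₀S
  have hx₀ne : x₀ ≠ 0 := by intro h; rw [h] at hx₀norm; simp at hx₀norm
  refine ⟨f x₀, hpos _ hx₀ne, fun x => ?_⟩
  rcases eq_or_ne x 0 with rfl | hx
  · simp [show f 0 = 0 by simpa using hs 0 0]
  · have hxn : ‖x‖ ≠ 0 := norm_ne_zero_iff.mpr hx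
    have hmem : ‖x‖⁻¹ • x ∈ Metric.sphere (0 : E) 1 := by
      simp [norm_smul, abs_of_nonneg (inv_nonneg.mpr (norm_nonneg x)),
        inv_mul_cancel₀ hxn]
    have := hx₀min hmem
    simp only [Set.mem_setOf_eq] at this
    have heq : f (‖x‖⁻¹ • x) = ‖x‖⁻¹ * f x := by
      rw [hs]; congr 1; exact abs_of_nonneg (inv_nonneg.mpr (norm_nonneg x))
    rw [heq] at this
    have h0 : (0:ℝ) < ‖x‖ := lt_of_le_of_ne (norm_nonneg x) (Ne.symm hxn)
    calc f x₀ * ‖x‖ ≤ (‖x‖⁻¹ * f x) * ‖x‖ :=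
          mul_le_mul_of_nonneg_right this (norm_nonneg x)
      _ = f x := by field_simp

lemma slope_limit {a trS : ℝ} (m : ℕ) (q : Polynomial ℝ)
    (h : ∀ t : ℝ, 0 < t → 1 + trS * t + q.eval t * t ^ 2 ≤ (1 + t * a) ^ m) :
    trS ≤ m * a := by
  have hderiv : HasDerivAt (fun t : ℝ => (1 + t * a) ^ m) (m * a) 0 := by
    have h1 : HasDerivAt (fun t : ℝ => 1 + t * a) a 0 :=
      (hasDerivAt_mul_const a).const_add 1
    simpa using h1.fun_pow m
  have hslope : Tendsto (fun t : ℝ => ((1 + t * a) ^ m - 1) / t) (nhdsWithin 0 (Set.Ioi 0))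
      (nhds (m * a)) := by
    have := hasDerivAt_iff_tendsto_slope.mp hderiv
    have hmono : nhdsWithin (0:ℝ) (Set.Ioi 0) ≤ nhdsWithin 0 {(0:ℝ)}ᶜ :=
      nhdsWithin_mono 0 (fun t ht => ne_of_gt ht)
    refine (this.mono_left hmono).congr' ?_
    filter_upwards [self_mem_nhdsWithin] with t ht
    simp [slope_def_field]
  have hq : Tendsto (fun t : ℝ => q.eval t * t) (nhdsWithin 0 (Set.Ioi 0)) (nhds 0) := by
    have : Tendsto (fun t : ℝ => q.eval t * t) (nhds 0) (nhds (q.eval 0 * 0)) :=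
      (q.continuous.mul continuous_id).tendsto 0
    simpa using this.mono_left nhdsWithin_le_nhds
  have hcomb : Tendsto (fun t : ℝ => ((1 + t * a) ^ m - 1) / t - q.eval t * t)
      (nhdsWithin 0 (Set.Ioi 0)) (nhds (m * a)) := by
    simpa using hslope.sub hq
  refine ge_of_tendsto hcomb ?_
  filter_upwards [self_mem_nhdsWithin] with t ht
  have ht' : (0:ℝ) < t := ht
  have := h t ht'
  rw [le_sub_iff_add_le, le_div_iff₀ ht']
  nlinarith [this]

end Helpers

/-- The distribution of a standard Gaussian vector in `ℝ^m`. -/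
noncomputable def stdGaussian (m : ℕ) : Measure (Fin m → ℝ) :=
  Measure.pi fun _ => gaussianReal 0 1

lemma stdGaussian_prob (m : ℕ) : IsProbabilityMeasure (stdGaussian m) := by
  unfold _root_.stdGaussian; infer_instance

lemma gaussianReal_openPos : (gaussianReal 0 1).IsOpenPosMeasure := by
  constructor
  intro U hU hne h0
  exact hU.measure_ne_zero volume hne ((gaussianReal_absolutelyContinuous' 0 one_ne_zero) h0)

lemma stdGaussian_openPos (m : ℕ) : (stdGaussian m).IsOpenPosMeasure := by
  haveI := gaussianReal_openPos
  unfold _root_.stdGaussian; infer_instance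

lemma stdGaussian_map_eval (m : ℕ) (j : Fin m) :
    Measure.map (fun x : Fin m → ℝ => x j) (stdGaussian m) = gaussianReal 0 1 := by
  refine Measure.ext fun s hs => ?_
  rw [Measure.map_apply (measurable_pi_apply j) hs]
  have hpre : (fun x : Fin m → ℝ => x j) ⁻¹' s
      = Set.pi Set.univ (Function.update (fun _ : Fin m => Set.univ) j s) :=
    Set.eval_preimage
  rw [_root_.stdGaussian, hpre, Measure.pi_pi]
  rw [Finset.prod_eq_single j (fun i _ hij => by
    rw [Function.update_of_ne hij]; exact measure_univ) (by simp)]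
  rw [Function.update_self]

lemma integrable_abs_gaussian : Integrable (fun x : ℝ => |x|) (gaussianReal 0 1) := by
  rw [gaussianReal_of_var_ne_zero 0 one_ne_zero]
  rw [integrable_withDensity_iff (measurable_gaussianPDF 0 1)
    (ae_of_all _ fun x => ENNReal.ofReal_lt_top)]
  have base : Integrable (fun x : ℝ => x ^ (1:ℝ) * Real.exp (-(2:ℝ)⁻¹ * x ^ 2)) :=
    integrable_rpow_mul_exp_neg_mul_sq (by norm_num) (by norm_num)
  have base2 : Integrable (fun x : ℝ => |x * Real.exp (-(2:ℝ)⁻¹ * x ^ 2)|) := by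
    simpa [Real.rpow_one] using base.abs
  have hpdf : ∀ x : ℝ, (gaussianPDF 0 1 x).toReal
      = (Real.sqrt (2 * Real.pi))⁻¹ * Real.exp (-(2:ℝ)⁻¹ * x ^ 2) := by
    intro x
    rw [gaussianPDF, ENNReal.toReal_ofReal (gaussianPDFReal_nonneg 0 1 x), gaussianPDFReal]
    push_cast
    rw [show -(x - 0) ^ 2 / (2 * (1:ℝ)) = -(2:ℝ)⁻¹ * x ^ 2 by ring, mul_one]
  refine (base2.const_mul ((Real.sqrt (2 * Real.pi))⁻¹)).congr (ae_of_all _ fun x => ?_)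
  simp only []
  rw [hpdf, abs_mul, abs_of_pos (Real.exp_pos _)]
  ring

attribute [local instance] Matrix.normedAddCommGroup Matrix.normedSpace

theorem stmt2 (m : ℕ) (hm : 1 ≤ m)
    (nF : (Fin m → ℝ) → ℝ)
    (hn0 : ∀ x, nF x = 0 ↔ x = 0)
    (hns : ∀ (c : ℝ) (x), nF (c • x) = |c| * nF x)
    (hna : ∀ x y, nF (x + y) ≤ nF x + nF y) :
    ∃ J : (Fin m → ℝ) →ₗ[ℝ] (Fin m → ℝ),
      (∫ x, nF (J x) ∂stdGaussian m) = 1 ∧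
      ∀ P : (Fin m → ℝ) →ₗ[ℝ] (Fin m → ℝ), P ∘ₗ P = P →
        (Module.finrank ℝ (LinearMap.range P) : ℝ) / m ≤
          ∫ x, nF (J (P x)) ∂stdGaussian m := by
  classical
  haveI : Nonempty (Fin m) := ⟨⟨0, hm⟩⟩
  haveI := stdGaussian_prob m
  haveI := stdGaussian_openPos m
  set μ := stdGaussian m with hμdef
  -- basic properties of nF
  have nF0 : nF 0 = 0 := (hn0 0).mpr rfl
  have nFnn : ∀ x, 0 ≤ nF x := normlike_nonneg nF hns hna
  have nFpos : ∀ x, x ≠ 0 → 0 < nF x := fun x hx =>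
    lt_of_le_of_ne (nFnn x) (fun h => hx ((hn0 x).mp h.symm))
  set e : Fin m → (Fin m → ℝ) := fun i j => if i = j then 1 else 0 with hedef
  have nFub : ∀ x, nF x ≤ (∑ i, nF (e i)) * ‖x‖ := by
    intro x
    have hx := pi_eq_sum_univ x
    calc nF x = nF (∑ i, x i • e i) := by rw [← hx]
      _ ≤ ∑ i, nF (x i • e i) := normlike_sum_le nF nF0 hna _ _
      _ = ∑ i, |x i| * nF (e i) := by simp_rw [hns]
      _ ≤ ∑ i, ‖x‖ * nF (e i) := by
          refine Finset.sum_le_sum fun i _ => ?_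
          exact mul_le_mul_of_nonneg_right
            (by simpa [Real.norm_eq_abs] using norm_le_pi_norm x i) (nFnn _)
      _ = (∑ i, nF (e i)) * ‖x‖ := by rw [← Finset.mul_sum, mul_comm]
  have nFcont : Continuous nF := normlike_continuous nF hns hna nFub
  -- the matrix functional α
  set M := Matrix (Fin m) (Fin m) ℝ
  have mulVec_cont : ∀ A : M, Continuous fun x : Fin m → ℝ => A.mulVec x := by
    intro A
    have := LinearMap.continuous_of_finiteDimensional A.mulVecLin
    simpa [funext fun x => (Matrix.mulVecLin_apply A x)] using this
  set α : M → ℝ := fun A => ∫ x, nF (A.mulVec x) ∂μ with hαdef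
  -- integrability
  have int_coord : ∀ j : Fin m, Integrable (fun x : Fin m → ℝ => |x j|) μ := by
    intro j
    have h := integrable_abs_gaussian
    rw [← stdGaussian_map_eval m j] at h
    exact (integrable_map_measure continuous_abs.aestronglyMeasurable
      (measurable_pi_apply j).aemeasurable).mp h
  have hdec : ∀ (A : M) (x : Fin m → ℝ), A.mulVec x = ∑ j, x j • (fun i => A i j) := by
    intro A x
    funext i
    rw [Finset.sum_apply]
    simp [Matrix.mulVec, dotProduct, mul_comm]
  have hptwise : ∀ (A : M) (x : Fin m → ℝ),
      nF (A.mulVec x) ≤ ∑ j, nF (fun i => A i j) * |x j| := by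
    intro A x
    rw [hdec A x]
    calc nF (∑ j, x j • (fun i => A i j))
        ≤ ∑ j, nF (x j • (fun i => A i j)) := normlike_sum_le nF nF0 hna _ _
      _ = ∑ j, nF (fun i => A i j) * |x j| := by
          simp_rw [hns]
          exact Finset.sum_congr rfl fun j _ => mul_comm _ _
  have int_majorant : ∀ A : M, Integrable (fun x : Fin m → ℝ =>
      ∑ j, nF (fun i => A i j) * |x j|) μ :=
    fun A => integrable_finset_sum _ fun j _ => (int_coord j).const_mul _
  have int_main : ∀ A : M, Integrable (fun x => nF (A.mulVec x)) μ := by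
    intro A
    refine Integrable.mono' (int_majorant A)
      ((nFcont.comp (mulVec_cont A)).aestronglyMeasurable) (ae_of_all _ fun x => ?_)
    rw [Real.norm_eq_abs, abs_of_nonneg (nFnn _)]
    exact hptwise A x
  -- α properties
  have α_nonneg : ∀ A : M, 0 ≤ α A := fun A => integral_nonneg fun x => nFnn _
  have α_smul : ∀ (c : ℝ) (A : M), α (c • A) = |c| * α A := by
    intro c A
    simp only [hαdef]
    have hpt : ∀ x, nF ((c • A).mulVec x) = |c| * nF (A.mulVec x) := fun x => by
      rw [Matrix.smul_mulVec, hns]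
    simp_rw [hpt]
    exact integral_const_mul _ _
  have α_add : ∀ A B : M, α (A + B) ≤ α A + α B := by
    intro A B
    simp only [hαdef]
    rw [← integral_add (int_main A) (int_main B)]
    refine integral_mono (int_main (A + B)) ((int_main A).add (int_main B)) fun x => ?_
    rw [Matrix.add_mulVec]
    exact hna _ _
  have α_pos : ∀ A : M, A ≠ 0 → 0 < α A := by
    intro A hA
    rw [hαdef]
    rw [integral_pos_iff_support_of_nonneg (fun x => nFnn _) (int_main A)]
    have hopen : IsOpen (Function.support fun x => nF (A.mulVec x)) := by
      have : (Function.support fun x : Fin m → ℝ => nF (A.mulVec x))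
          = (fun x : Fin m → ℝ => nF (A.mulVec x)) ⁻¹' {(0:ℝ)}ᶜ := by
        ext x; simp [Function.mem_support]
      rw [this]
      exact (isOpen_compl_singleton).preimage (nFcont.comp (mulVec_cont A))
    -- find a point where A.mulVec is nonzero
    obtain ⟨i, j, hij⟩ : ∃ i j, A i j ≠ 0 := by
      by_contra hc
      push_neg at hc
      exact hA (by funext i j; exact hc i j)
    have hcol : A.mulVec (Pi.single j 1) ≠ 0 := by
      intro hz
      apply hij
      have := congrFun hz i
      simpa [Matrix.mulVec_single] using this
    refine hopen.measure_pos μ ⟨Pi.single j 1, ?_⟩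
    simp only [Function.mem_support]
    exact ne_of_gt (nFpos _ hcol)
  have α_zero : ∀ A : M, α A = 0 → A = 0 := by
    intro A h
    by_contra hA
    exact absurd h (ne_of_gt (α_pos A hA))
  have α_ub : ∃ C : ℝ, ∀ A : M, α A ≤ C * ‖A‖ := by
    set Cn := ∑ i, nF (e i)
    set K : Fin m → ℝ := fun j => ∫ x, |x j| ∂μ with hKdef
    have hKnn : ∀ j, 0 ≤ K j := fun j => integral_nonneg fun x => abs_nonneg _
    refine ⟨Cn * ∑ j, K j, fun A => ?_⟩
    have step1 : α A ≤ ∑ j, nF (fun i => A i j) * K j := by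
      calc α A ≤ ∫ x, (∑ j, nF (fun i => A i j) * |x j|) ∂μ :=
            integral_mono (int_main A) (int_majorant A) (hptwise A)
        _ = ∑ j, nF (fun i => A i j) * K j := by
            rw [integral_finset_sum _ fun j _ => (int_coord j).const_mul _]
            exact Finset.sum_congr rfl fun j _ => integral_const_mul _ _
    have step2 : ∀ j, nF (fun i => A i j) ≤ Cn * ‖A‖ := by
      intro j
      refine (nFub _).trans (mul_le_mul_of_nonneg_left ?_ ?_)
      · refine (pi_norm_le_iff_of_nonneg (norm_nonneg A)).mpr fun i => ?_
        exact A.norm_entry_le_entrywise_sup_norm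
      · exact Finset.sum_nonneg fun i _ => nFnn _
    calc α A ≤ ∑ j, nF (fun i => A i j) * K j := step1
      _ ≤ ∑ j, (Cn * ‖A‖) * K j :=
          Finset.sum_le_sum fun j _ => mul_le_mul_of_nonneg_right (step2 j) (hKnn j)
      _ = Cn * (∑ j, K j) * ‖A‖ := by rw [← Finset.mul_sum]; ring
  obtain ⟨C, hC⟩ := α_ub
  have α_cont : Continuous α := normlike_continuous α α_smul α_add hC
  obtain ⟨c, hc, hlb⟩ := normlike_lower α α_cont α_pos α_smul
  set K : Set M := {A : M | α A ≤ 1} with hKdef2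
  have hKclosed : IsClosed K := isClosed_le α_cont continuous_const
  have hKsub : K ⊆ Metric.closedBall 0 c⁻¹ := by
    intro A hA
    rw [Metric.mem_closedBall, dist_zero_right]
    have h1 : c * ‖A‖ ≤ 1 := le_trans (hlb A) hA
    rw [show c⁻¹ = 1 / c by ring, le_div_iff₀ hc]
    linarith [mul_comm c ‖A‖]
  have hKcompact : IsCompact K :=
    (isCompact_closedBall (0 : M) c⁻¹).of_isClosed_subset hKclosed hKsub
  have hα1 : 0 < α 1 := α_pos 1 one_ne_zero
  set A₀ : M := (α 1)⁻¹ • 1 with hA₀def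
  have hA₀K : A₀ ∈ K := by
    have : α A₀ = 1 := by
      rw [hA₀def, α_smul, abs_of_pos (inv_pos.mpr hα1), inv_mul_cancel₀ (ne_of_gt hα1)]
    simp only [hKdef2, Set.mem_setOf_eq, this, le_refl]
  have hA₀det : A₀.det ≠ 0 := by
    rw [hA₀def, Matrix.det_smul, Matrix.det_one, mul_one]
    exact pow_ne_zero _ (inv_ne_zero (ne_of_gt hα1))
  obtain ⟨J, hJK, hJmax⟩ := hKcompact.exists_isMaxOn ⟨A₀, hA₀K⟩
    ((continuous_abs.comp (Continuous.matrix_det continuous_id)).continuousOn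
      (f := fun A : M => |A.det|))
  have hJmax' : ∀ A ∈ K, |Matrix.det A| ≤ |Matrix.det J| := fun A hA => hJmax hA
  have hJdet : J.det ≠ 0 := by
    intro h
    have := hJmax' A₀ hA₀K
    rw [h] at this
    simp only [abs_zero] at this
    exact hA₀det (abs_eq_zero.mp (le_antisymm this (abs_nonneg _)))
  have hJunit : IsUnit J.det := isUnit_iff_ne_zero.mpr hJdet
  have hJne : J ≠ 0 := by
    intro h
    rw [h, Matrix.det_zero] at hJdet
    exact hJdet rfl
  have hαJpos : 0 < α J := α_pos J hJne
  have hαJ : α J = 1 := by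
    by_contra hne
    have hlt : α J < 1 := lt_of_le_of_ne hJK hne
    have hJ'K : (α J)⁻¹ • J ∈ K := by
      have : α ((α J)⁻¹ • J) = 1 := by
        rw [α_smul, abs_of_pos (inv_pos.mpr hαJpos), inv_mul_cancel₀ (ne_of_gt hαJpos)]
      simp only [hKdef2, Set.mem_setOf_eq, this, le_refl]
    have hmax := hJmax' _ hJ'K
    rw [Matrix.det_smul, abs_mul, abs_pow, abs_of_pos (inv_pos.mpr hαJpos)] at hmax
    have hgt : (1:ℝ) < (α J)⁻¹ := by
      rw [lt_inv_comm₀ one_pos hαJpos]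
      simpa using hlt
    have hpow : (1:ℝ) < ((α J)⁻¹) ^ (Fintype.card (Fin m)) := by
      apply one_lt_pow₀ hgt
      simp only [Fintype.card_fin]
      omega
    nlinarith [abs_pos.mpr hJdet, hpow, hmax]
  -- key inequality: trace (J⁻¹ * B) ≤ m * α B
  have key : ∀ B : M, Matrix.trace (J⁻¹ * B) ≤ m * α B := by
    intro B
    set S : M := J⁻¹ * B with hSdef
    have hdet_eq : ∀ t : ℝ, (J + t • B).det = J.det * (1 + t • S).det := by
      intro t
      have hfact : J + t • B = J * (1 + t • S) := by
        rw [Matrix.mul_add, Matrix.mul_one, Matrix.mul_smul, hSdef, ← Matrix.mul_assoc,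
          Matrix.mul_nonsing_inv J hJunit, Matrix.one_mul]
      rw [hfact, Matrix.det_mul]
    have hstep1 : ∀ t : ℝ, 0 < t → |(J + t • B).det| ≤ (1 + t * α B) ^ m * |J.det| := by
      intro t ht
      have hbase : (0:ℝ) ≤ 1 + t * α B := by nlinarith [α_nonneg B]
      rcases eq_or_ne (α (J + t • B)) 0 with h0 | hne0
      · rw [α_zero _ h0]
        simp only [Matrix.det_zero, abs_zero]
        positivity
      · have hs : 0 < α (J + t • B) := lt_of_le_of_ne (α_nonneg _) (Ne.symm hne0)
        have hmem : (α (J + t • B))⁻¹ • (J + t • B) ∈ K := by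
          have : α ((α (J + t • B))⁻¹ • (J + t • B)) = 1 := by
            rw [α_smul, abs_of_pos (inv_pos.mpr hs), inv_mul_cancel₀ (ne_of_gt hs)]
          simp only [hKdef2, Set.mem_setOf_eq, this, le_refl]
        have hmax := hJmax' _ hmem
        rw [Matrix.det_smul, abs_mul, abs_pow, abs_of_pos (inv_pos.mpr hs),
          Fintype.card_fin] at hmax
        have hsle : α (J + t • B) ≤ 1 + t * α B := by
          have h1 := α_add J (t • B)
          have h2 : α (t • B) = t * α B := by rw [α_smul, abs_of_pos ht]
          rw [hαJ] at h1
          rw [h2] at h1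
          exact h1
        have hJKle : |J.det| ≤ 1 * |J.det| := by rw [one_mul]
        have hpos : (0:ℝ) < (α (J + t • B))⁻¹ ^ m := by positivity
        have h3 : |(J + t • B).det| ≤ (α (J + t • B)) ^ m * |J.det| := by
          have := mul_le_mul_of_nonneg_left hmax (le_of_lt (pow_pos hs m))
          rw [← mul_assoc, ← mul_pow, mul_inv_cancel₀ (ne_of_gt hs), one_pow, one_mul] at this
          exact this
        refine h3.trans (mul_le_mul_of_nonneg_right ?_ (abs_nonneg _))
        exact pow_le_pow_left₀ (le_of_lt hs) hsle m
    set q : Polynomial ℝ := (Matrix.det (1 + (Polynomial.X : Polynomial ℝ) • S.map Polynomial.C)).divX.divX with hqdef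
    have hineq : ∀ t : ℝ, 0 < t → 1 + S.trace * t + q.eval t * t ^ 2 ≤ (1 + t * α B) ^ m := by
      intro t ht
      have hpoly : (1 + t • S).det = 1 + S.trace * t + q.eval t * t ^ 2 :=
        Matrix.det_one_add_smul t S
      have habs : |J.det| * |(1 + t • S).det| ≤ (1 + t * α B) ^ m * |J.det| := by
        rw [← abs_mul, ← hdet_eq t]
        exact hstep1 t ht
      have hJd : (0:ℝ) < |J.det| := abs_pos.mpr hJdet
      calc 1 + S.trace * t + q.eval t * t ^ 2 ≤ |(1 + t • S).det| := by
            rw [hpoly]; exact le_abs_self _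
        _ ≤ (1 + t * α B) ^ m := by nlinarith [habs, hJd, abs_nonneg ((1 + t • S).det)]
    exact slope_limit m q hineq
  -- conclusion
  refine ⟨J.mulVecLin, ?_, ?_⟩
  · simp_rw [Matrix.mulVecLin_apply]
    exact hαJ
  · intro P hP
    set Pm : M := LinearMap.toMatrix' P with hPmdef
    have hPx : ∀ x, P x = Pm.mulVec x := by
      intro x
      conv_lhs => rw [← Matrix.toLin'_toMatrix' P]
      rw [Matrix.toLin'_apply]
    have hint : ∫ x, nF (J.mulVecLin (P x)) ∂μ = α (J * Pm) := by
      simp only [hαdef]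
      congr 1
      funext x
      rw [Matrix.mulVecLin_apply, hPx, Matrix.mulVec_mulVec]
    rw [hint]
    obtain ⟨p, hp⟩ := (LinearMap.isProj_iff_isIdempotentElem P).mpr hP
    have hrange : LinearMap.range P = p := by
      apply le_antisymm
      · rintro y ⟨x, rfl⟩
        exact hp.map_mem x
      · intro x hx
        exact ⟨x, hp.map_id x hx⟩
    have htr : Matrix.trace Pm = (Module.finrank ℝ (LinearMap.range P) : ℝ) := by
      have h1 : LinearMap.trace ℝ _ P = Matrix.trace Pm := by
        rw [LinearMap.trace_eq_matrix_trace ℝ (Pi.basisFun ℝ (Fin m)) P,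
          LinearMap.toMatrix_eq_toMatrix']
      have h2 := hp.trace
      rw [← h1, h2, hrange]
    have hJinv : J⁻¹ * (J * Pm) = Pm := by
      rw [← Matrix.mul_assoc, Matrix.nonsing_inv_mul J hJunit, Matrix.one_mul]
    have hkey := key (J * Pm)
    rw [hJinv, htr] at hkey
    have hmpos : (0:ℝ) < m := by exact_mod_cast hm
    rw [div_le_iff₀ hmpos]
    nlinarith [hkey, α_nonneg (J * Pm)]
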